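/- Let n, g be positive integers with 2g ≤ n and let p be an integer. Then p ≥ g if and only if there exist integers d_1, …, d_{n−1} and r_1, …, r_{n−1} such that Σᵢ d_i = p, Σᵢ r_i = 2g, and 4·d_i − r_i² ≥ 0 for every i. -/
import Mathlib


/-- **Arithmetic content of Proposition 5.2 (prop:equivalent).**  Let `n, g` be
positive integers with `2g ≤ n` and let `p` be an integer.  Then `p ≥ g` if and
only if there exist integers `d₁, …, d_{n−1}` and `r₁, …, r_{n−1}` such that
`Σ dᵢ = p`, `Σ rᵢ = 2g`, and `4dᵢ − rᵢ² ≥ 0` for every `i`. -/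
theorem osy_condition_iff_p_ge_g
    (n g : ℕ) (hn : 0 < n) (hg : 0 < g) (hgn : 2 * g ≤ n) (p : ℤ) :
    (g : ℤ) ≤ p ↔
      ∃ d r : Fin (n - 1) → ℤ,
        (∑ i, d i = p) ∧ (∑ i, r i = 2 * (g : ℤ)) ∧
        ∀ i, 4 * d i - (r i) ^ 2 ≥ 0 := by
  have hm : g ≤ n - 1 := by omega
  have hm0 : 0 < n - 1 := by omega
  constructor
  · intro hp
    refine ⟨fun i => (if (i : ℕ) < g then 1 else 0) + (if (i : ℕ) = 0 then p - g else 0),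
      fun i => if (i : ℕ) < g then 2 else 0, ?_, ?_, ?_⟩
    · rw [Finset.sum_add_distrib]
      have h1 : ∑ i : Fin (n-1), (if (i : ℕ) < g then (1:ℤ) else 0) = g := by
        rw [Fin.sum_univ_eq_sum_range (fun j => if j < g then (1:ℤ) else 0)]
        rw [← Finset.sum_subset (Finset.range_subset_range.mpr hm)
          (fun x _ hx => by rw [if_neg]; simpa using hx)]
        rw [Finset.sum_congr rfl (fun x hx => if_pos (Finset.mem_range.mp hx))]
        simp
      have h2 : ∑ i : Fin (n-1), (if (i : ℕ) = 0 then p - g else 0) = p - g := by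
        rw [Fin.sum_univ_eq_sum_range (fun j => if j = 0 then p - (g:ℤ) else 0)]
        rw [Finset.sum_ite_eq' (Finset.range (n-1)) 0 (fun _ => p - (g:ℤ))]
        rw [if_pos (Finset.mem_range.mpr hm0)]
      rw [h1, h2]; ring
    · rw [Fin.sum_univ_eq_sum_range (fun j => if j < g then (2:ℤ) else 0)]
      rw [← Finset.sum_subset (Finset.range_subset_range.mpr hm)
        (fun x _ hx => by rw [if_neg]; simpa using hx)]
      rw [Finset.sum_congr rfl (fun x hx => if_pos (Finset.mem_range.mp hx))]
      simp [mul_comm]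
    · intro i
      dsimp only
      by_cases h0 : (i : ℕ) = 0
      · have hlt : (i : ℕ) < g := by omega
        rw [if_pos hlt, if_pos h0, if_pos hlt]
        nlinarith
      · by_cases hlt : (i : ℕ) < g
        · rw [if_pos hlt, if_neg h0, if_pos hlt]; norm_num
        · rw [if_neg hlt, if_neg h0, if_neg hlt]; norm_num
  · rintro ⟨d, r, hd, hr, h⟩
    have key : ∀ i, r i ≤ 2 * d i := by
      intro i
      have := h i
      nlinarith [sq_nonneg (r i - 1)]
    have : ∑ i, r i ≤ ∑ i, 2 * d i := Finset.sum_le_sum fun i _ => key i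
    rw [hr, ← Finset.mul_sum, hd] at this
    linarith
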